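/- Let n, m, n_1, ..., n_k be positive integers with m < n = n_1 + ... + n_k. Then -∑_{i=1}^k (n_i/n) log₂(n_i/n) ≥ ((∑_{i=1}^k min(n_i, m)) - m)/(n - m) · log₂(n/m). -/

import Mathlib

open Finset Real

lemma petrov_key {M N x : ℝ} (hM : 0 < M) (hMN : M < N) (hx : 0 < x) (hxN : x ≤ N) :
    (N * min x M - M * x) / (N - M) * Real.log (N / M) ≤ x * Real.log (N / x) := by
  have hN : 0 < N := hM.trans hMN
  have hNM : 0 < N - M := sub_pos.2 hMN
  rcases le_total x M with h | h
  · rw [min_eq_left h]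
    have hx' : (N * x - M * x) / (N - M) = x := by field_simp
    rw [hx']
    have hle : Real.log (N / M) ≤ Real.log (N / x) := by
      apply Real.log_le_log (by positivity)
      exact div_le_div_of_nonneg_left hN.le hx h
    nlinarith [hle]
  · rw [min_eq_right h]
    set t := (N - x) / (N - M) with ht_def
    set s := (x - M) / (N - M) with hs_def
    have ht : 0 ≤ t := by
      apply div_nonneg (by linarith) hNM.le
    have hs : 0 ≤ s := by
      apply div_nonneg (by linarith) hNM.le
    have hts : t + s = 1 := by rw [ht_def, hs_def]; field_simp; ring
    have hcomb : t * M + s * N = x := by rw [ht_def, hs_def]; field_simp; ring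
    have hconc := Real.concaveOn_negMulLog.2 (Set.mem_Ici.2 hM.le) (Set.mem_Ici.2 hN.le) ht hs hts
    rw [smul_eq_mul, smul_eq_mul, smul_eq_mul, smul_eq_mul, hcomb] at hconc
    simp only [Real.negMulLog] at hconc
    rw [Real.log_div hN.ne' hM.ne', Real.log_div hN.ne' hx.ne']
    have egoal : (N * M - M * x) / (N - M) = t * M := by
      rw [ht_def]; field_simp
    rw [egoal]
    have e2 : (x - s * N) * Real.log N = t * M * Real.log N := by
      have : x - s * N = t * M := by linarith [hcomb]
      rw [this]
    nlinarith [hconc, e2]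

/-- Petrov's entropy-type inequality: for positive integers `m < n = ∑ a i`,
`-∑ (a i / n) log₂ (a i / n) ≥ ((∑ min (a i) m) - m)/(n - m) · log₂ (n / m)`. -/
theorem petrov_entropy_ineq (k m n : ℕ) (a : Fin k → ℕ)
    (ha : ∀ i, 0 < a i) (hm : 0 < m) (hmn : m < n) (hsum : n = ∑ i, a i) :
    -∑ i, ((a i : ℝ) / n) * Real.logb 2 ((a i : ℝ) / n) ≥
      ((∑ i, (min (a i) m : ℝ)) - m) / ((n : ℝ) - m) * Real.logb 2 ((n : ℝ) / m) := by
  have hmR : (0:ℝ) < m := by exact_mod_cast hm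
  have hnR : (0:ℝ) < n := by exact_mod_cast hm.trans hmn
  have hmnR : (m:ℝ) < n := by exact_mod_cast hmn
  have hNM : (0:ℝ) < (n:ℝ) - m := sub_pos.2 hmnR
  have hlog2 : (0:ℝ) < Real.log 2 := Real.log_pos (by norm_num)
  have main : ∑ i, ((n:ℝ) * min (a i : ℝ) (m:ℝ) - m * a i) / ((n:ℝ) - m) * Real.log ((n:ℝ)/m)
      ≤ ∑ i, (a i : ℝ) * Real.log ((n:ℝ) / a i) := by
    apply Finset.sum_le_sum
    intro i _
    have hai : (0:ℝ) < a i := by exact_mod_cast ha i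
    have haiN : (a i : ℝ) ≤ n := by
      have : a i ≤ n := hsum ▸ Finset.single_le_sum (fun j _ => Nat.zero_le _) (Finset.mem_univ i)
      exact_mod_cast this
    exact petrov_key hmR hmnR hai haiN
  have hsumR : (∑ i, (a i : ℝ)) = n := by exact_mod_cast hsum.symm
  have hLHS : ∑ i, ((n:ℝ) * min (a i : ℝ) (m:ℝ) - m * a i) / ((n:ℝ) - m) * Real.log ((n:ℝ)/m)
      = (n:ℝ) * (((∑ i, (min (a i) m : ℝ)) - m) / ((n:ℝ) - m) * Real.log ((n:ℝ)/m)) := by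
    rw [← Finset.sum_mul, ← Finset.sum_div, Finset.sum_sub_distrib, ← Finset.mul_sum,
      ← Finset.mul_sum, hsumR]
    have hmin : (∑ i, min (a i : ℝ) (m:ℝ)) = ∑ i, (min (a i) m : ℝ) := by
      apply Finset.sum_congr rfl
      intro i _
      simp
    rw [hmin]
    field_simp
  have hRHS : ∑ i, (a i : ℝ) * Real.log ((n:ℝ) / a i)
      = (n:ℝ) * (-∑ i, ((a i:ℝ)/n) * Real.log ((a i:ℝ)/n)) := by
    rw [mul_neg, ← neg_eq_iff_eq_neg, ← Finset.sum_neg_distrib, Finset.mul_sum]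
    apply Finset.sum_congr rfl
    intro i _
    have hai : (0:ℝ) < a i := by exact_mod_cast ha i
    rw [Real.log_div hnR.ne' hai.ne', Real.log_div hai.ne' hnR.ne']
    field_simp
    ring
  rw [hLHS, hRHS] at main
  have key : ((∑ i, (min (a i) m : ℝ)) - m) / ((n:ℝ) - m) * Real.log ((n:ℝ)/m)
      ≤ -∑ i, ((a i:ℝ)/n) * Real.log ((a i:ℝ)/n) := le_of_mul_le_mul_left main hnR
  rw [ge_iff_le]
  simp only [Real.logb]
  have e1 : -∑ i, ((a i:ℝ)/n) * (Real.log ((a i:ℝ)/n) / Real.log 2)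
      = (-∑ i, ((a i:ℝ)/n) * Real.log ((a i:ℝ)/n)) / Real.log 2 := by
    simp only [mul_div_assoc']
    rw [← Finset.sum_div, neg_div]
  rw [e1, ← mul_div_assoc]
  exact div_le_div_of_nonneg_right key hlog2.le
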